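/- (Robust S-lemma.) Let A, B₁, B₂ be real symmetric n×n matrices, a, b₁, b₂ ∈ ℝ^n, and γ, α, β, μ₁, μ₂, δ₁, δ₂ ∈ ℝ with μ₁ ≤ μ₂, δ₁ ≤ δ₂ and α < β. Assume that the set Ω_W is convex and that there exists x₀ ∈ ℝ^n satisfying the Slater-type condition α < ½x₀ᵀ(B₁+μB₂)x₀ + (b₁+δb₂)ᵀx₀ < β for all μ ∈ [μ₁,μ₂] and all δ ∈ [δ₁,δ₂]. Then the following are equivalent: (a) for every x ∈ ℝ^n, if α ≤ ½xᵀ(B₁+μB₂)x + (b₁+δb₂)ᵀx ≤ β for all μ ∈ [μ₁,μ₂] and all δ ∈ [δ₁,δ₂], then ½xᵀAx + aᵀx + γ ≥ 0; (b) there exist λ₁, λ₂ ≥ 0, μ_α, μ_β ∈ [μ₁,μ₂] with μ_α + μ_β = μ₁ + μ₂, and δ_α, δ_β ∈ [δ₁,δ₂] such that for all x ∈ ℝ^n: ½xᵀAx + aᵀx + γ + λ₁(½xᵀ(B₁+μ_βB₂)x + (b₁+δ_βb₂)ᵀx − β) + λ₂(α − (½xᵀ(B₁+μ_αB₂)x +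 (b₁+δ_αb₂)ᵀx)) ≥ 0. -/

import Mathlib

open Matrix Set Pointwise

/-- The set `Ω_W ⊆ ℝ⁵`: the Minkowski sum of the image of `y = (x,t) ∈ ℝ^{n+1}` under the
five quadratic forms `½yᵀH₀y`, `max_{μ∈[μ₁,μ₂]} ½yᵀ(W_{1β}+μW₂)y`,
`max_{μ∈[μ₁,μ₂]} ½yᵀ(W_{2β}+μW₂)y`, `−min_{μ∈[μ₁,μ₂]} ½yᵀ(W_{1α}+μW₂)y`,
`−min_{μ∈[μ₁,μ₂]} ½yᵀ(W_{2α}+μW₂)y` with the open positive orthant of `ℝ⁵`. -/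
noncomputable def OmegaW (n : ℕ) (A B₁ B₂ : Matrix (Fin n) (Fin n) ℝ)
    (a b₁ b₂ : Fin n → ℝ) (γ α β μ₁ μ₂ δ₁ δ₂ : ℝ) : Set (Fin 5 → ℝ) :=
  (Set.range (fun y : (Fin n → ℝ) × ℝ =>
    ![(1 / 2) * (y.1 ⬝ᵥ (A *ᵥ y.1)) + y.2 * (a ⬝ᵥ y.1) + γ * y.2 ^ 2,
      sSup ((fun μ => (1 / 2) * (y.1 ⬝ᵥ ((B₁ + μ • B₂) *ᵥ y.1))
        + y.2 * ((b₁ + δ₁ • b₂) ⬝ᵥ y.1) - β * y.2 ^ 2) '' Icc μ₁ μ₂),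
      sSup ((fun μ => (1 / 2) * (y.1 ⬝ᵥ ((B₁ + μ • B₂) *ᵥ y.1))
        + y.2 * ((b₁ + δ₂ • b₂) ⬝ᵥ y.1) - β * y.2 ^ 2) '' Icc μ₁ μ₂),
      -sInf ((fun μ => (1 / 2) * (y.1 ⬝ᵥ ((B₁ + μ • B₂) *ᵥ y.1))
        + y.2 * ((b₁ + δ₁ • b₂) ⬝ᵥ y.1) - α * y.2 ^ 2) '' Icc μ₁ μ₂),
      -sInf ((fun μ => (1 / 2) * (y.1 ⬝ᵥ ((B₁ + μ • B₂) *ᵥ y.1))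
        + y.2 * ((b₁ + δ₂ • b₂) ⬝ᵥ y.1) - α * y.2 ^ 2) '' Icc μ₁ μ₂)]))
  + {z : Fin 5 → ℝ | ∀ i, 0 < z i}


section RobustSAux


/-- A "quadratic-like" function: satisfies the expansion identity on 2-dim subspaces. -/
def IsQuad {V : Type*} [AddCommGroup V] [Module ℝ V] (q : V → ℝ) : Prop :=
  ∀ (a b : ℝ) (u w : V), q (a • u + b • w) =
    a ^ 2 * q u + a * b * (q (u + w) - q u - q w) + b ^ 2 * q w
lemma IsQuad.add {V : Type*} [AddCommGroup V] [Module ℝ V] {q r : V → ℝ}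
    (hq : IsQuad q) (hr : IsQuad r) : IsQuad (fun v => q v + r v) := by
  intro a b u w; simp only; rw [hq, hr]; ring

lemma IsQuad.const_mul {V : Type*} [AddCommGroup V] [Module ℝ V] {q : V → ℝ} (c : ℝ)
    (hq : IsQuad q) : IsQuad (fun v => c * q v) := by
  intro a b u w; simp only; rw [hq]; ring

lemma IsQuad.sub {V : Type*} [AddCommGroup V] [Module ℝ V] {q r : V → ℝ}
    (hq : IsQuad q) (hr : IsQuad r) : IsQuad (fun v => q v - r v) := by
  intro a b u w; simp only; rw [hq, hr]; ring

lemma IsQuad.neg_apply {V : Type*} [AddCommGroup V] [Module ℝ V] {q : V → ℝ}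
    (hq : IsQuad q) (w : V) : q (-w) = q w := by
  have := hq 0 (-1) w w
  simpa using this

/-- Key elementary lemma: if the max of two quadratic-like functions is
everywhere nonnegative, some convex combination is everywhere nonnegative. -/
lemma isQuad_max_nonneg {V : Type*} [AddCommGroup V] [Module ℝ V] {g₀ g₁ : V → ℝ}
    (h₀ : IsQuad g₀) (h₁ : IsQuad g₁)
    (hmax : ∀ v, 0 ≤ max (g₀ v) (g₁ v)) :
    ∃ θ ∈ Icc (0:ℝ) 1, ∀ v, 0 ≤ (1 - θ) * g₀ v + θ * g₁ v := by
  by_contra hcon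
  push_neg at hcon
  -- two open sets
  set U : Set ℝ := ⋃ (v : V) (_ : g₀ v - g₁ v < 0),
      {θ : ℝ | (1 - θ) * g₀ v + θ * g₁ v < 0} with hU
  set W : Set ℝ := ⋃ (v : V) (_ : 0 < g₀ v - g₁ v),
      {θ : ℝ | (1 - θ) * g₀ v + θ * g₁ v < 0} with hW
  have hUopen : IsOpen U := by
    refine isOpen_iUnion fun v => isOpen_iUnion fun _ => ?_
    exact isOpen_lt (by continuity) continuous_const
  have hWopen : IsOpen W := by
    refine isOpen_iUnion fun v => isOpen_iUnion fun _ => ?_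
    exact isOpen_lt (by continuity) continuous_const
  have hcover : Icc (0:ℝ) 1 ⊆ U ∪ W := by
    intro θ hθ
    obtain ⟨v, hv⟩ := hcon θ hθ
    rcases lt_trichotomy (g₀ v - g₁ v) 0 with h | h | h
    · exact Or.inl (mem_iUnion.2 ⟨v, mem_iUnion.2 ⟨h, hv⟩⟩)
    · exfalso
      have hgeq : g₀ v = g₁ v := by linarith
      have heq : (1 - θ) * g₀ v + θ * g₁ v = g₁ v := by rw [hgeq]; ring
      have := hmax v
      rw [hgeq, max_self] at this
      linarith [heq ▸ hv]
    · exact Or.inr (mem_iUnion.2 ⟨v, mem_iUnion.2 ⟨h, hv⟩⟩)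
  have h0U : (0:ℝ) ∈ Icc (0:ℝ) 1 ∩ U := by
    obtain ⟨v, hv⟩ := hcon 0 (by constructor <;> norm_num)
    have hg0 : g₀ v < 0 := by linarith
    have hg1 : 0 ≤ g₁ v := by
      have := hmax v; rcases max_cases (g₀ v) (g₁ v) with ⟨h1, _⟩ | ⟨h1, _⟩ <;> linarith
    refine ⟨by constructor <;> norm_num, mem_iUnion.2 ⟨v, mem_iUnion.2 ⟨by linarith, ?_⟩⟩⟩
    simpa using hg0
  have h1W : (1:ℝ) ∈ Icc (0:ℝ) 1 ∩ W := by
    obtain ⟨v, hv⟩ := hcon 1 (by constructor <;> norm_num)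
    have hg1 : g₁ v < 0 := by linarith
    have hg0 : 0 ≤ g₀ v := by
      have := hmax v; rcases max_cases (g₀ v) (g₁ v) with ⟨h1, _⟩ | ⟨h1, _⟩ <;> linarith
    refine ⟨by constructor <;> norm_num, mem_iUnion.2 ⟨v, mem_iUnion.2 ⟨by linarith, ?_⟩⟩⟩
    simpa using hg1
  obtain ⟨θ, hθIcc, hθU, hθW⟩ :=
    (isPreconnected_Icc (a := (0:ℝ)) (b := 1)) U W hUopen hWopen hcover
      ⟨0, h0U⟩ ⟨1, h1W⟩
  -- extract witnesses
  obtain ⟨u, hu⟩ := mem_iUnion.1 hθU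
  obtain ⟨hDu, hQu⟩ := mem_iUnion.1 hu
  obtain ⟨w, hw⟩ := mem_iUnion.1 hθW
  obtain ⟨hDw, hQw⟩ := mem_iUnion.1 hw
  simp only [mem_setOf_eq] at hQu hQw
  -- the quadratic at θ and the difference
  set Qt : V → ℝ := fun v => (1 - θ) * g₀ v + θ * g₁ v with hQt
  set D : V → ℝ := fun v => g₀ v - g₁ v with hD
  have hQtq : IsQuad Qt := ((h₀.const_mul (1 - θ)).add (h₁.const_mul θ))
  have hDq : IsQuad D := h₀.sub h₁
  -- choose sign for w to make cross term nonpositive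
  have hsign : ∃ w' : V, Qt w' < 0 ∧ 0 < D w' ∧ Qt (u + w') - Qt u - Qt w' ≤ 0 := by
    rcases le_total (Qt (u + w) - Qt u - Qt w) 0 with h | h
    · exact ⟨w, hQw, hDw, h⟩
    · refine ⟨-w, by rwa [hQtq.neg_apply], by rwa [hDq.neg_apply], ?_⟩
      have h2 := hQtq 1 (-1) u w
      have e : (1:ℝ) • u + (-1:ℝ) • w = u + -w := by
        simp
      rw [e] at h2
      rw [hQtq.neg_apply, h2]
      nlinarith [h]
  obtain ⟨w', hQw', hDw', hcross⟩ := hsign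
  -- IVT on the path s ↦ D((1-s)•u + s•w')
  set path : ℝ → V := fun s => (1 - s) • u + s • w' with hpath
  have hDpath : ∀ s, D (path s) =
      (1 - s) ^ 2 * D u + (1 - s) * s * (D (u + w') - D u - D w') + s ^ 2 * D w' :=
    fun s => hDq (1 - s) s u w'
  have hQtpath : ∀ s, Qt (path s) =
      (1 - s) ^ 2 * Qt u + (1 - s) * s * (Qt (u + w') - Qt u - Qt w') + s ^ 2 * Qt w' :=
    fun s => hQtq (1 - s) s u w'
  have hcont : ContinuousOn (fun s => D (path s)) (Icc 0 1) := by
    have : (fun s => D (path s)) = fun s =>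
        (1 - s) ^ 2 * D u + (1 - s) * s * (D (u + w') - D u - D w') + s ^ 2 * D w' := by
      funext s; exact hDpath s
    rw [this]; fun_prop
  have h01 : (0:ℝ) ∈ Icc (D (path 0)) (D (path 1)) := by
    have e0 : path 0 = u := by simp [hpath]
    have e1 : path 1 = w' := by simp [hpath]
    rw [e0, e1]
    exact ⟨le_of_lt hDu, le_of_lt hDw'⟩
  obtain ⟨s, hsIcc, hs⟩ := intermediate_value_Icc (by norm_num : (0:ℝ) ≤ 1) hcont h01
  -- at the zero of D, both g₀ and g₁ are negative
  have hQtu : Qt u < 0 := hQu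
  have hQtz : Qt (path s) < 0 := by
    rw [hQtpath s]
    have hs0 : (0:ℝ) ≤ s := hsIcc.1
    have hs1 : s ≤ 1 := hsIcc.2
    have hterm : (1 - s) * s * (Qt (u + w') - Qt u - Qt w') ≤ 0 :=
      mul_nonpos_of_nonneg_of_nonpos (mul_nonneg (by linarith) hs0) hcross
    rcases le_total s (1/2) with hhalf | hhalf
    · have h14 : (0:ℝ) ≤ (1 - s)^2 - 1/4 := by nlinarith
      have := mul_nonneg h14 (neg_nonneg.2 hQtu.le)
      nlinarith [mul_nonneg (sq_nonneg s) (neg_nonneg.2 hQw'.le)]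
    · have h14 : (0:ℝ) ≤ s^2 - 1/4 := by nlinarith
      have := mul_nonneg h14 (neg_nonneg.2 hQw'.le)
      nlinarith [mul_nonneg (sq_nonneg (1 - s)) (neg_nonneg.2 hQtu.le)]
  have hDz : D (path s) = 0 := hs
  have hg01 : g₀ (path s) = g₁ (path s) := by
    have : g₀ (path s) - g₁ (path s) = 0 := hDz
    linarith
  have hg0neg : g₀ (path s) < 0 := by
    have : Qt (path s) = g₀ (path s) := by
      simp only [hQt]; rw [hg01]; ring
    linarith [hQtz, this.symm ▸ hQtz]
  have := hmax (path s)
  rw [hg01, max_self] at this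
  linarith [hg01 ▸ hg0neg]

/-- The standard quadratic function on `ℝⁿ × ℝ`. -/
noncomputable def QF {n : ℕ} (M : Matrix (Fin n) (Fin n) ℝ) (v : Fin n → ℝ) (c : ℝ) :
    ((Fin n → ℝ) × ℝ) → ℝ :=
  fun y => (1 / 2) * (y.1 ⬝ᵥ (M *ᵥ y.1)) + y.2 * (v ⬝ᵥ y.1) + c * y.2 ^ 2

lemma isQuad_QF {n : ℕ} (M : Matrix (Fin n) (Fin n) ℝ) (v : Fin n → ℝ) (c : ℝ) :
    IsQuad (QF M v c) := by
  intro a b u w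
  simp only [QF, Prod.fst_add, Prod.snd_add, Prod.smul_fst, Prod.smul_snd, smul_eq_mul,
    mulVec_add, mulVec_smul, dotProduct_add, add_dotProduct, smul_dotProduct,
    dotProduct_smul, smul_eq_mul]
  ring

/-- Decomposition of the parametrized quadratic into atoms. -/
lemma QF_decomp {n : ℕ} (B₁ B₂ : Matrix (Fin n) (Fin n) ℝ) (b₁ b₂ : Fin n → ℝ)
    (c μ δ : ℝ) (y : (Fin n → ℝ) × ℝ) :
    QF (B₁ + μ • B₂) (b₁ + δ • b₂) c y =
      QF B₁ b₁ c y + δ * (y.2 * (b₂ ⬝ᵥ y.1)) + μ * ((1 / 2) * (y.1 ⬝ᵥ (B₂ *ᵥ y.1))) := by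
  simp only [QF, add_mulVec, smul_mulVec, dotProduct_add, dotProduct_smul,
    add_dotProduct, smul_dotProduct, smul_eq_mul]
  ring

lemma sSup_affine_Icc {μ₁ μ₂ C D : ℝ} (h : μ₁ ≤ μ₂) :
    sSup ((fun μ => C + μ * D) '' Icc μ₁ μ₂) = max (C + μ₁ * D) (C + μ₂ * D) := by
  apply IsGreatest.csSup_eq
  constructor
  · rcases le_total 0 D with hD | hD
    · have : max (C + μ₁ * D) (C + μ₂ * D) = C + μ₂ * D :=
        max_eq_right (by nlinarith)
      rw [this]
      exact ⟨μ₂, ⟨h, le_refl _⟩, rfl⟩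
    · have : max (C + μ₁ * D) (C + μ₂ * D) = C + μ₁ * D :=
        max_eq_left (by nlinarith)
      rw [this]
      exact ⟨μ₁, ⟨le_refl _, h⟩, rfl⟩
  · rintro x ⟨μ, ⟨h1, h2⟩, rfl⟩
    show C + μ * D ≤ max (C + μ₁ * D) (C + μ₂ * D)
    rcases le_total 0 D with hD | hD
    · exact le_max_of_le_right (by nlinarith)
    · exact le_max_of_le_left (by nlinarith)

lemma sInf_affine_Icc {μ₁ μ₂ C D : ℝ} (h : μ₁ ≤ μ₂) :
    sInf ((fun μ => C + μ * D) '' Icc μ₁ μ₂) = min (C + μ₁ * D) (C + μ₂ * D) := by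
  apply IsLeast.csInf_eq
  constructor
  · rcases le_total 0 D with hD | hD
    · have : min (C + μ₁ * D) (C + μ₂ * D) = C + μ₁ * D :=
        min_eq_left (by nlinarith)
      rw [this]
      exact ⟨μ₁, ⟨le_refl _, h⟩, rfl⟩
    · have : min (C + μ₁ * D) (C + μ₂ * D) = C + μ₂ * D :=
        min_eq_right (by nlinarith)
      rw [this]
      exact ⟨μ₂, ⟨h, le_refl _⟩, rfl⟩
  · rintro x ⟨μ, ⟨h1, h2⟩, rfl⟩
    show min (C + μ₁ * D) (C + μ₂ * D) ≤ C + μ * D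
    rcases le_total 0 D with hD | hD
    · exact min_le_of_left_le (by nlinarith)
    · exact min_le_of_right_le (by nlinarith)

lemma affine_le_of_endpoints {μ₁ μ₂ C D K μ : ℝ} (h1 : C + μ₁ * D ≤ K) (h2 : C + μ₂ * D ≤ K)
    (hμ : μ ∈ Icc μ₁ μ₂) : C + μ * D ≤ K := by
  obtain ⟨ha, hb⟩ := hμ
  rcases le_total 0 D with hD | hD
  · nlinarith
  · nlinarith

lemma le_affine_of_endpoints {μ₁ μ₂ C D K μ : ℝ} (h1 : K ≤ C + μ₁ * D) (h2 : K ≤ C + μ₂ * D)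
    (hμ : μ ∈ Icc μ₁ μ₂) : K ≤ C + μ * D := by
  obtain ⟨ha, hb⟩ := hμ
  rcases le_total 0 D with hD | hD
  · nlinarith
  · nlinarith

lemma four_zero {c1 c2 c3 c4 m1 m2 m3 m4 : ℝ}
    (hc1 : 0 ≤ c1) (hc2 : 0 ≤ c2) (hc3 : 0 ≤ c3) (hc4 : 0 ≤ c4)
    (hm1 : m1 < 0) (hm2 : m2 < 0) (hm3 : m3 < 0) (hm4 : m4 < 0)
    (hsum : 0 ≤ c1 * m1 + c2 * m2 + c3 * m3 + c4 * m4) :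
    c1 = 0 ∧ c2 = 0 ∧ c3 = 0 ∧ c4 = 0 := by
  have t1 : c1 * m1 ≤ 0 := mul_nonpos_of_nonneg_of_nonpos hc1 hm1.le
  have t2 : c2 * m2 ≤ 0 := mul_nonpos_of_nonneg_of_nonpos hc2 hm2.le
  have t3 : c3 * m3 ≤ 0 := mul_nonpos_of_nonneg_of_nonpos hc3 hm3.le
  have t4 : c4 * m4 ≤ 0 := mul_nonpos_of_nonneg_of_nonpos hc4 hm4.le
  refine ⟨?_, ?_, ?_, ?_⟩
  · by_contra hne
    nlinarith [mul_neg_of_pos_of_neg (lt_of_le_of_ne hc1 (Ne.symm hne)) hm1]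
  · by_contra hne
    nlinarith [mul_neg_of_pos_of_neg (lt_of_le_of_ne hc2 (Ne.symm hne)) hm2]
  · by_contra hne
    nlinarith [mul_neg_of_pos_of_neg (lt_of_le_of_ne hc3 (Ne.symm hne)) hm3]
  · by_contra hne
    nlinarith [mul_neg_of_pos_of_neg (lt_of_le_of_ne hc4 (Ne.symm hne)) hm4]

end RobustSAux

section RobustSAux2

variable {n : ℕ}

lemma QF_add_mu (B₁ B₂ : Matrix (Fin n) (Fin n) ℝ) (v : Fin n → ℝ) (c μ : ℝ)
    (y : (Fin n → ℝ) × ℝ) :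
    QF B₁ v c y + μ * ((1 / 2) * (y.1 ⬝ᵥ (B₂ *ᵥ y.1))) = QF (B₁ + μ • B₂) v c y := by
  simp only [QF, add_mulVec, smul_mulVec, dotProduct_add, dotProduct_smul, smul_eq_mul]
  ring

lemma QF_delta (M : Matrix (Fin n) (Fin n) ℝ) (b₁ b₂ : Fin n → ℝ) (c δ : ℝ)
    (y : (Fin n → ℝ) × ℝ) :
    QF M (b₁ + δ • b₂) c y = QF M b₁ c y + δ * (y.2 * (b₂ ⬝ᵥ y.1)) := by
  simp only [QF, add_dotProduct, smul_dotProduct, smul_eq_mul]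
  ring

lemma QF_at_one (M : Matrix (Fin n) (Fin n) ℝ) (v : Fin n → ℝ) (c : ℝ) (x : Fin n → ℝ) :
    QF M v c (x, 1) = (1 / 2) * (x ⬝ᵥ (M *ᵥ x)) + v ⬝ᵥ x + c := by
  simp [QF]

lemma QF_scale (M : Matrix (Fin n) (Fin n) ℝ) (v : Fin n → ℝ) (c : ℝ)
    (y : (Fin n → ℝ) × ℝ) (ht : y.2 ≠ 0) :
    QF M v c y = y.2 ^ 2 * ((1 / 2) * ((y.2⁻¹ • y.1) ⬝ᵥ (M *ᵥ (y.2⁻¹ • y.1)))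
      + v ⬝ᵥ (y.2⁻¹ • y.1) + c) := by
  simp only [QF, mulVec_smul, smul_dotProduct, dotProduct_smul, smul_eq_mul]
  field_simp

lemma comp_sSup (B₁ B₂ : Matrix (Fin n) (Fin n) ℝ) (b₁ b₂ : Fin n → ℝ) (c δ μ₁ μ₂ : ℝ)
    (hμ : μ₁ ≤ μ₂) (y : (Fin n → ℝ) × ℝ) :
    sSup ((fun μ => (1 / 2) * (y.1 ⬝ᵥ ((B₁ + μ • B₂) *ᵥ y.1))
        + y.2 * ((b₁ + δ • b₂) ⬝ᵥ y.1) - c * y.2 ^ 2) '' Icc μ₁ μ₂)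
    = max (QF B₁ (b₁ + δ • b₂) (-c) y + μ₁ * ((1 / 2) * (y.1 ⬝ᵥ (B₂ *ᵥ y.1))))
        (QF B₁ (b₁ + δ • b₂) (-c) y + μ₂ * ((1 / 2) * (y.1 ⬝ᵥ (B₂ *ᵥ y.1)))) := by
  rw [show (fun μ => (1 / 2) * (y.1 ⬝ᵥ ((B₁ + μ • B₂) *ᵥ y.1))
        + y.2 * ((b₁ + δ • b₂) ⬝ᵥ y.1) - c * y.2 ^ 2)
      = fun μ => QF B₁ (b₁ + δ • b₂) (-c) y + μ * ((1 / 2) * (y.1 ⬝ᵥ (B₂ *ᵥ y.1))) from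
    funext fun μ => by
      simp only [QF, add_mulVec, smul_mulVec, dotProduct_add, dotProduct_smul,
        smul_eq_mul]
      ring]
  exact sSup_affine_Icc hμ

lemma comp_sInf (B₁ B₂ : Matrix (Fin n) (Fin n) ℝ) (b₁ b₂ : Fin n → ℝ) (c δ μ₁ μ₂ : ℝ)
    (hμ : μ₁ ≤ μ₂) (y : (Fin n → ℝ) × ℝ) :
    sInf ((fun μ => (1 / 2) * (y.1 ⬝ᵥ ((B₁ + μ • B₂) *ᵥ y.1))
        + y.2 * ((b₁ + δ • b₂) ⬝ᵥ y.1) - c * y.2 ^ 2) '' Icc μ₁ μ₂)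
    = min (QF B₁ (b₁ + δ • b₂) (-c) y + μ₁ * ((1 / 2) * (y.1 ⬝ᵥ (B₂ *ᵥ y.1))))
        (QF B₁ (b₁ + δ • b₂) (-c) y + μ₂ * ((1 / 2) * (y.1 ⬝ᵥ (B₂ *ᵥ y.1)))) := by
  rw [show (fun μ => (1 / 2) * (y.1 ⬝ᵥ ((B₁ + μ • B₂) *ᵥ y.1))
        + y.2 * ((b₁ + δ • b₂) ⬝ᵥ y.1) - c * y.2 ^ 2)
      = fun μ => QF B₁ (b₁ + δ • b₂) (-c) y + μ * ((1 / 2) * (y.1 ⬝ᵥ (B₂ *ᵥ y.1))) from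
    funext fun μ => by
      simp only [QF, add_mulVec, smul_mulVec, dotProduct_add, dotProduct_smul,
        smul_eq_mul]
      ring]
  exact sInf_affine_Icc hμ

end RobustSAux2


set_option maxHeartbeats 2000000 in
/-- Theorem 2, a robust S-lemma. -/
theorem robust_S_lemma (n : ℕ) (A B₁ B₂ : Matrix (Fin n) (Fin n) ℝ)
    (a b₁ b₂ : Fin n → ℝ) (γ α β μ₁ μ₂ δ₁ δ₂ : ℝ)
    (hA : A.IsSymm) (hB₁ : B₁.IsSymm) (hB₂ : B₂.IsSymm)
    (hμ : μ₁ ≤ μ₂) (hδ : δ₁ ≤ δ₂) (hαβ : α < β)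
    (hconv : Convex ℝ (OmegaW n A B₁ B₂ a b₁ b₂ γ α β μ₁ μ₂ δ₁ δ₂))
    (hSlater : ∃ x₀ : Fin n → ℝ, ∀ μ ∈ Icc μ₁ μ₂, ∀ δ ∈ Icc δ₁ δ₂,
      α < (1 / 2) * (x₀ ⬝ᵥ ((B₁ + μ • B₂) *ᵥ x₀)) + (b₁ + δ • b₂) ⬝ᵥ x₀ ∧
      (1 / 2) * (x₀ ⬝ᵥ ((B₁ + μ • B₂) *ᵥ x₀)) + (b₁ + δ • b₂) ⬝ᵥ x₀ < β) :
    (∀ x : Fin n → ℝ,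
      (∀ μ ∈ Icc μ₁ μ₂, ∀ δ ∈ Icc δ₁ δ₂,
        α ≤ (1 / 2) * (x ⬝ᵥ ((B₁ + μ • B₂) *ᵥ x)) + (b₁ + δ • b₂) ⬝ᵥ x ∧
        (1 / 2) * (x ⬝ᵥ ((B₁ + μ • B₂) *ᵥ x)) + (b₁ + δ • b₂) ⬝ᵥ x ≤ β) →
      (1 / 2) * (x ⬝ᵥ (A *ᵥ x)) + a ⬝ᵥ x + γ ≥ 0)
    ↔
    (∃ lam₁ lam₂ : ℝ, 0 ≤ lam₁ ∧ 0 ≤ lam₂ ∧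
      ∃ μa ∈ Icc μ₁ μ₂, ∃ μb ∈ Icc μ₁ μ₂,
      ∃ δa ∈ Icc δ₁ δ₂, ∃ δb ∈ Icc δ₁ δ₂,
        μa + μb = μ₁ + μ₂ ∧
        ∀ x : Fin n → ℝ,
          (1 / 2) * (x ⬝ᵥ (A *ᵥ x)) + a ⬝ᵥ x + γ +
          lam₁ * ((1 / 2) * (x ⬝ᵥ ((B₁ + μb • B₂) *ᵥ x)) + (b₁ + δb • b₂) ⬝ᵥ x - β) +
          lam₂ * (α - ((1 / 2) * (x ⬝ᵥ ((B₁ + μa • B₂) *ᵥ x)) + (b₁ + δa • b₂) ⬝ᵥ x))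
            ≥ 0) := by
  constructor
  · -- hard direction
    intro hfeas
    obtain ⟨x₀, hx₀⟩ := hSlater
    classical
    set vv : (Fin n → ℝ) × ℝ → (Fin 5 → ℝ) := fun y =>
      ![QF A a γ y,
        max (QF B₁ (b₁ + δ₁ • b₂) (-β) y + μ₁ * ((1 / 2) * (y.1 ⬝ᵥ (B₂ *ᵥ y.1))))
            (QF B₁ (b₁ + δ₁ • b₂) (-β) y + μ₂ * ((1 / 2) * (y.1 ⬝ᵥ (B₂ *ᵥ y.1)))),
        max (QF B₁ (b₁ + δ₂ • b₂) (-β) y + μ₁ * ((1 / 2) * (y.1 ⬝ᵥ (B₂ *ᵥ y.1))))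
            (QF B₁ (b₁ + δ₂ • b₂) (-β) y + μ₂ * ((1 / 2) * (y.1 ⬝ᵥ (B₂ *ᵥ y.1)))),
        -min (QF B₁ (b₁ + δ₁ • b₂) (-α) y + μ₁ * ((1 / 2) * (y.1 ⬝ᵥ (B₂ *ᵥ y.1))))
            (QF B₁ (b₁ + δ₁ • b₂) (-α) y + μ₂ * ((1 / 2) * (y.1 ⬝ᵥ (B₂ *ᵥ y.1)))),
        -min (QF B₁ (b₁ + δ₂ • b₂) (-α) y + μ₁ * ((1 / 2) * (y.1 ⬝ᵥ (B₂ *ᵥ y.1))))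
            (QF B₁ (b₁ + δ₂ • b₂) (-α) y + μ₂ * ((1 / 2) * (y.1 ⬝ᵥ (B₂ *ᵥ y.1))))] with hvv
    have hΩeq : OmegaW n A B₁ B₂ a b₁ b₂ γ α β μ₁ μ₂ δ₁ δ₂
        = Set.range vv + {z : Fin 5 → ℝ | ∀ i, 0 < z i} := by
      unfold OmegaW
      congr 1
      apply congrArg
      funext y
      rw [hvv]
      refine congrArg₂ Matrix.vecCons rfl ?_
      refine congrArg₂ Matrix.vecCons (comp_sSup B₁ B₂ b₁ b₂ β δ₁ μ₁ μ₂ hμ y) ?_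
      refine congrArg₂ Matrix.vecCons (comp_sSup B₁ B₂ b₁ b₂ β δ₂ μ₁ μ₂ hμ y) ?_
      refine congrArg₂ Matrix.vecCons
        (congrArg Neg.neg (comp_sInf B₁ B₂ b₁ b₂ α δ₁ μ₁ μ₂ hμ y)) ?_
      refine congrArg₂ Matrix.vecCons
        (congrArg Neg.neg (comp_sInf B₁ B₂ b₁ b₂ α δ₂ μ₁ μ₂ hμ y)) rfl
    -- Step 1 : 0 is not in Ω
    have h0notmem : (0 : Fin 5 → ℝ) ∉ OmegaW n A B₁ B₂ a b₁ b₂ γ α β μ₁ μ₂ δ₁ δ₂ := by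
      rw [hΩeq]
      intro hmem
      rw [Set.mem_add] at hmem
      obtain ⟨u, ⟨y, rfl⟩, w, hw, huw⟩ := hmem
      have hcomp : ∀ i, vv y i < 0 := by
        intro i
        have h := congrFun huw i
        simp only [Pi.add_apply, Pi.zero_apply] at h
        have := hw i
        linarith
      have h0 := hcomp 0
      have h1 := hcomp 1
      have h2 := hcomp 2
      have h3 := hcomp 3
      have h4 := hcomp 4
      simp only [hvv, Matrix.cons_val_zero, Matrix.cons_val_one, Matrix.head_cons,
        Matrix.cons_val_two, Matrix.tail_cons, Matrix.cons_val_three,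
        Matrix.cons_val_four, neg_lt, neg_zero] at h0 h1 h2 h3 h4
      -- h1 h2 : max (...) < 0 ; h3 h4 : 0 < min (...)
      have hb11 := (le_max_left _ _).trans_lt h1
      have hb12 := (le_max_right _ _).trans_lt h1
      have hb21 := (le_max_left _ _).trans_lt h2
      have hb22 := (le_max_right _ _).trans_lt h2
      have ha11 := lt_of_lt_of_le h3 (min_le_left _ _)
      have ha12 := lt_of_lt_of_le h3 (min_le_right _ _)
      have ha21 := lt_of_lt_of_le h4 (min_le_left _ _)
      have ha22 := lt_of_lt_of_le h4 (min_le_right _ _)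
      rcases eq_or_ne y.2 0 with ht | ht
      · have e : QF B₁ (b₁ + δ₁ • b₂) (-β) y = QF B₁ (b₁ + δ₁ • b₂) (-α) y := by
          simp only [QF, ht]; ring
        rw [e] at hb11
        linarith
      · have ht2 : (0:ℝ) < y.2 ^ 2 := by positivity
        -- corner facts for x' = y.2⁻¹ • y.1
        have corner_b : ∀ ν d : ℝ,
            QF B₁ (b₁ + d • b₂) (-β) y + ν * ((1 / 2) * (y.1 ⬝ᵥ (B₂ *ᵥ y.1))) < 0 →
            (1 / 2) * ((y.2⁻¹ • y.1) ⬝ᵥ ((B₁ + ν • B₂) *ᵥ (y.2⁻¹ • y.1)))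
              + (b₁ + d • b₂) ⬝ᵥ (y.2⁻¹ • y.1) < β := by
          intro ν d hlt
          rw [QF_add_mu, QF_scale _ _ _ y ht] at hlt
          nlinarith [ht2, hlt]
        have corner_a : ∀ ν d : ℝ,
            0 < QF B₁ (b₁ + d • b₂) (-α) y + ν * ((1 / 2) * (y.1 ⬝ᵥ (B₂ *ᵥ y.1))) →
            α < (1 / 2) * ((y.2⁻¹ • y.1) ⬝ᵥ ((B₁ + ν • B₂) *ᵥ (y.2⁻¹ • y.1)))
              + (b₁ + d • b₂) ⬝ᵥ (y.2⁻¹ • y.1) := by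
          intro ν d hlt
          rw [QF_add_mu, QF_scale _ _ _ y ht] at hlt
          nlinarith [ht2, hlt]
        have gb11 := corner_b μ₁ δ₁ hb11
        have gb12 := corner_b μ₂ δ₁ hb12
        have gb21 := corner_b μ₁ δ₂ hb21
        have gb22 := corner_b μ₂ δ₂ hb22
        have ga11 := corner_a μ₁ δ₁ ha11
        have ga12 := corner_a μ₂ δ₁ ha12
        have ga21 := corner_a μ₁ δ₂ ha21
        have ga22 := corner_a μ₂ δ₂ ha22
        -- decomposition of the constraint function into scalar atoms
        have hform : ∀ ν d : ℝ,
            (1 / 2) * ((y.2⁻¹ • y.1) ⬝ᵥ ((B₁ + ν • B₂) *ᵥ (y.2⁻¹ • y.1)))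
              + (b₁ + d • b₂) ⬝ᵥ (y.2⁻¹ • y.1)
            = ((1 / 2) * ((y.2⁻¹ • y.1) ⬝ᵥ (B₁ *ᵥ (y.2⁻¹ • y.1)))
                + b₁ ⬝ᵥ (y.2⁻¹ • y.1) + d * (b₂ ⬝ᵥ (y.2⁻¹ • y.1)))
              + ν * ((1 / 2) * ((y.2⁻¹ • y.1) ⬝ᵥ (B₂ *ᵥ (y.2⁻¹ • y.1)))) := by
          intro ν d
          simp only [add_mulVec, smul_mulVec, dotProduct_add, dotProduct_smul,
            add_dotProduct, smul_dotProduct, smul_eq_mul]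
          ring
        rw [hform μ₁ δ₁] at gb11 ga11
        rw [hform μ₂ δ₁] at gb12 ga12
        rw [hform μ₁ δ₂] at gb21 ga21
        rw [hform μ₂ δ₂] at gb22 ga22
        have hfeas' : ∀ μ ∈ Icc μ₁ μ₂, ∀ d ∈ Icc δ₁ δ₂,
            α ≤ (1 / 2) * ((y.2⁻¹ • y.1) ⬝ᵥ ((B₁ + μ • B₂) *ᵥ (y.2⁻¹ • y.1)))
                + (b₁ + d • b₂) ⬝ᵥ (y.2⁻¹ • y.1) ∧
            (1 / 2) * ((y.2⁻¹ • y.1) ⬝ᵥ ((B₁ + μ • B₂) *ᵥ (y.2⁻¹ • y.1)))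
                + (b₁ + d • b₂) ⬝ᵥ (y.2⁻¹ • y.1) ≤ β := by
          intro μ hμm d hdm
          rw [hform μ d]
          constructor
          · have s1 : α ≤ ((1 / 2) * ((y.2⁻¹ • y.1) ⬝ᵥ (B₁ *ᵥ (y.2⁻¹ • y.1)))
                + b₁ ⬝ᵥ (y.2⁻¹ • y.1)
                + μ₁ * ((1 / 2) * ((y.2⁻¹ • y.1) ⬝ᵥ (B₂ *ᵥ (y.2⁻¹ • y.1)))))
                + d * (b₂ ⬝ᵥ (y.2⁻¹ • y.1)) :=
              le_affine_of_endpoints (by linarith) (by linarith) hdm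
            have s2 : α ≤ ((1 / 2) * ((y.2⁻¹ • y.1) ⬝ᵥ (B₁ *ᵥ (y.2⁻¹ • y.1)))
                + b₁ ⬝ᵥ (y.2⁻¹ • y.1)
                + μ₂ * ((1 / 2) * ((y.2⁻¹ • y.1) ⬝ᵥ (B₂ *ᵥ (y.2⁻¹ • y.1)))))
                + d * (b₂ ⬝ᵥ (y.2⁻¹ • y.1)) :=
              le_affine_of_endpoints (by linarith) (by linarith) hdm
            have s3 : α ≤ ((1 / 2) * ((y.2⁻¹ • y.1) ⬝ᵥ (B₁ *ᵥ (y.2⁻¹ • y.1)))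
                + b₁ ⬝ᵥ (y.2⁻¹ • y.1) + d * (b₂ ⬝ᵥ (y.2⁻¹ • y.1)))
                + μ * ((1 / 2) * ((y.2⁻¹ • y.1) ⬝ᵥ (B₂ *ᵥ (y.2⁻¹ • y.1)))) :=
              le_affine_of_endpoints (by linarith) (by linarith) hμm
            linarith
          · have s1 : ((1 / 2) * ((y.2⁻¹ • y.1) ⬝ᵥ (B₁ *ᵥ (y.2⁻¹ • y.1)))
                + b₁ ⬝ᵥ (y.2⁻¹ • y.1)
                + μ₁ * ((1 / 2) * ((y.2⁻¹ • y.1) ⬝ᵥ (B₂ *ᵥ (y.2⁻¹ • y.1)))))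
                + d * (b₂ ⬝ᵥ (y.2⁻¹ • y.1)) ≤ β :=
              affine_le_of_endpoints (by linarith) (by linarith) hdm
            have s2 : ((1 / 2) * ((y.2⁻¹ • y.1) ⬝ᵥ (B₁ *ᵥ (y.2⁻¹ • y.1)))
                + b₁ ⬝ᵥ (y.2⁻¹ • y.1)
                + μ₂ * ((1 / 2) * ((y.2⁻¹ • y.1) ⬝ᵥ (B₂ *ᵥ (y.2⁻¹ • y.1)))))
                + d * (b₂ ⬝ᵥ (y.2⁻¹ • y.1)) ≤ β :=
              affine_le_of_endpoints (by linarith) (by linarith) hdm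
            have s3 : ((1 / 2) * ((y.2⁻¹ • y.1) ⬝ᵥ (B₁ *ᵥ (y.2⁻¹ • y.1)))
                + b₁ ⬝ᵥ (y.2⁻¹ • y.1) + d * (b₂ ⬝ᵥ (y.2⁻¹ • y.1)))
                + μ * ((1 / 2) * ((y.2⁻¹ • y.1) ⬝ᵥ (B₂ *ᵥ (y.2⁻¹ • y.1)))) ≤ β :=
              affine_le_of_endpoints (by linarith) (by linarith) hμm
            linarith
        have hge := hfeas (y.2⁻¹ • y.1) hfeas'
        rw [QF_scale A a γ y ht] at h0
        nlinarith [ht2, h0, hge]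
    -- Step 2 : Ω is open
    have hOrth : IsOpen {z : Fin 5 → ℝ | ∀ i, 0 < z i} := by
      have : {z : Fin 5 → ℝ | ∀ i, 0 < z i} = ⋂ i, (fun z : Fin 5 → ℝ => z i) ⁻¹' Ioi 0 := by
        ext z; simp [mem_iInter, mem_preimage]
      rw [this]
      exact isOpen_iInter_of_finite fun i => isOpen_Ioi.preimage (continuous_apply i)
    have hOpen : IsOpen (OmegaW n A B₁ B₂ a b₁ b₂ γ α β μ₁ μ₂ δ₁ δ₂) := by
      rw [hΩeq]
      exact IsOpen.add_left hOrth
    -- Step 3 : separation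
    obtain ⟨f, hf⟩ := geometric_hahn_banach_point_open hconv hOpen h0notmem
    set cv : Fin 5 → ℝ := fun i => f (Pi.single i 1) with hcv
    have hrep : ∀ z : Fin 5 → ℝ, f z = ∑ i, z i * cv i := by
      intro z
      have hz : z = ∑ i, z i • (Pi.single i 1 : Fin 5 → ℝ) := by
        conv_lhs => rw [← Finset.univ_sum_single z]
        refine Finset.sum_congr rfl fun i _ => ?_
        rw [← Pi.single_smul, smul_eq_mul, mul_one]
      conv_lhs => rw [hz]
      rw [map_sum]
      refine Finset.sum_congr rfl fun i _ => ?_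
      rw [_root_.map_smul, smul_eq_mul]
    have hf' : ∀ (y : (Fin n → ℝ) × ℝ) (w : Fin 5 → ℝ), (∀ i, 0 < w i) →
        0 < ∑ i, (vv y + w) i * cv i := by
      intro y w hw
      have hmem : vv y + w ∈ OmegaW n A B₁ B₂ a b₁ b₂ γ α β μ₁ μ₂ δ₁ δ₂ := by
        rw [hΩeq]
        exact Set.add_mem_add (mem_range_self y) hw
      have := hf _ hmem
      rwa [map_zero, hrep] at this
    have hvv0 : vv 0 = 0 := by
      funext i
      simp only [hvv]
      fin_cases i <;>
        simp [QF, Prod.fst_zero, Prod.snd_zero]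
    have hwsum : ∀ w : Fin 5 → ℝ, (∀ i, 0 < w i) → 0 < ∑ i, w i * cv i := by
      intro w hw
      have := hf' 0 w hw
      rwa [hvv0, zero_add] at this
    have hcnonneg : ∀ i, 0 ≤ cv i := by
      intro i
      by_contra hci
      push_neg at hci
      set Ai := ∑ j ∈ Finset.univ.erase i, cv j with hAi
      set M := max 1 ((Ai + 1) / (-cv i)) with hM
      have hM1 : (1:ℝ) ≤ M := le_max_left _ _
      have hwpos : ∀ j, 0 < (fun j => if j = i then M else 1) j := by
        intro j; simp only; split <;> linarith
      have hsum : ∑ j, (fun j => if j = i then M else 1) j * cv j = M * cv i + Ai := by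
        rw [hAi, ← Finset.add_sum_erase _ (fun j => (fun j => if j = i then M else 1) j * cv j)
          (Finset.mem_univ i)]
        congr 1
        · simp
        · refine Finset.sum_congr rfl fun j hj => ?_
          have hne : j ≠ i := Finset.ne_of_mem_erase hj
          simp [hne]
      have hMc : M * cv i ≤ -(Ai + 1) := by
        have h2 : (Ai + 1) / (-cv i) ≤ M := le_max_right _ _
        have h3 : (0:ℝ) < -cv i := by linarith
        rw [div_le_iff₀ h3] at h2
        nlinarith
      have := hwsum _ hwpos
      rw [hsum] at this
      linarith
    have hT : 0 ≤ ∑ i, cv i := Finset.sum_nonneg fun i _ => hcnonneg i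
    have hsep : ∀ y, 0 ≤ ∑ i, vv y i * cv i := by
      intro y
      by_contra hS
      push_neg at hS
      set S := ∑ i, vv y i * cv i with hSdef
      set T := ∑ i, cv i with hTdef
      set ε := (-S) / (2 * (T + 1)) with hεdef
      have hεpos : 0 < ε := by
        rw [hεdef]; apply div_pos <;> linarith
      have hkey := hf' y (fun _ => ε) (fun _ => hεpos)
      simp only [Pi.add_apply] at hkey
      have hexp : ∑ i, (vv y i + ε) * cv i = S + ε * T := by
        rw [hSdef, hTdef, Finset.mul_sum, ← Finset.sum_add_distrib]
        exact Finset.sum_congr rfl fun i _ => by ring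
      rw [hexp] at hkey
      have hεT : ε * T ≤ (-S) / 2 := by
        rw [hεdef, div_mul_eq_mul_div, div_le_div_iff₀ (by linarith) (by norm_num)]
        nlinarith [mul_nonneg (by linarith : (0:ℝ) ≤ -S) hT]
      linarith
    -- expanded form of the separation inequality
    have hsep' : ∀ y : (Fin n → ℝ) × ℝ,
        0 ≤ QF A a γ y * cv 0
          + max (QF B₁ (b₁ + δ₁ • b₂) (-β) y + μ₁ * ((1 / 2) * (y.1 ⬝ᵥ (B₂ *ᵥ y.1))))
              (QF B₁ (b₁ + δ₁ • b₂) (-β) y + μ₂ * ((1 / 2) * (y.1 ⬝ᵥ (B₂ *ᵥ y.1)))) * cv 1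
          + max (QF B₁ (b₁ + δ₂ • b₂) (-β) y + μ₁ * ((1 / 2) * (y.1 ⬝ᵥ (B₂ *ᵥ y.1))))
              (QF B₁ (b₁ + δ₂ • b₂) (-β) y + μ₂ * ((1 / 2) * (y.1 ⬝ᵥ (B₂ *ᵥ y.1)))) * cv 2
          + (-min (QF B₁ (b₁ + δ₁ • b₂) (-α) y + μ₁ * ((1 / 2) * (y.1 ⬝ᵥ (B₂ *ᵥ y.1))))
              (QF B₁ (b₁ + δ₁ • b₂) (-α) y + μ₂ * ((1 / 2) * (y.1 ⬝ᵥ (B₂ *ᵥ y.1))))) * cv 3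
          + (-min (QF B₁ (b₁ + δ₂ • b₂) (-α) y + μ₁ * ((1 / 2) * (y.1 ⬝ᵥ (B₂ *ᵥ y.1))))
              (QF B₁ (b₁ + δ₂ • b₂) (-α) y + μ₂ * ((1 / 2) * (y.1 ⬝ᵥ (B₂ *ᵥ y.1))))) * cv 4 := by
      intro y
      have := hsep y
      rw [Fin.sum_univ_five] at this
      simpa only [hvv, Matrix.cons_val_zero, Matrix.cons_val_one, Matrix.head_cons,
        Matrix.cons_val_two, Matrix.tail_cons, Matrix.cons_val_three,
        Matrix.cons_val_four] using this
    -- Slater point gives positivity of cv 0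
    have corner_bS : ∀ ν ∈ Icc μ₁ μ₂, ∀ d ∈ Icc δ₁ δ₂,
        QF B₁ (b₁ + d • b₂) (-β) ((x₀, 1) : (Fin n → ℝ) × ℝ)
          + ν * ((1 / 2) * (((x₀, 1) : (Fin n → ℝ) × ℝ).1 ⬝ᵥ (B₂ *ᵥ ((x₀, 1) : (Fin n → ℝ) × ℝ).1))) < 0 := by
      intro ν hν d hd
      rw [QF_add_mu, QF_at_one]
      have := (hx₀ ν hν d hd).2
      linarith
    have corner_aS : ∀ ν ∈ Icc μ₁ μ₂, ∀ d ∈ Icc δ₁ δ₂,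
        0 < QF B₁ (b₁ + d • b₂) (-α) ((x₀, 1) : (Fin n → ℝ) × ℝ)
          + ν * ((1 / 2) * (((x₀, 1) : (Fin n → ℝ) × ℝ).1 ⬝ᵥ (B₂ *ᵥ ((x₀, 1) : (Fin n → ℝ) × ℝ).1))) := by
      intro ν hν d hd
      rw [QF_add_mu, QF_at_one]
      have := (hx₀ ν hν d hd).1
      linarith
    have hμ1m : μ₁ ∈ Icc μ₁ μ₂ := ⟨le_refl _, hμ⟩
    have hμ2m : μ₂ ∈ Icc μ₁ μ₂ := ⟨hμ, le_refl _⟩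
    have hδ1m : δ₁ ∈ Icc δ₁ δ₂ := ⟨le_refl _, hδ⟩
    have hδ2m : δ₂ ∈ Icc δ₁ δ₂ := ⟨hδ, le_refl _⟩
    have hmb1 : max (QF B₁ (b₁ + δ₁ • b₂) (-β) ((x₀, 1) : (Fin n → ℝ) × ℝ)
          + μ₁ * ((1 / 2) * (((x₀, 1) : (Fin n → ℝ) × ℝ).1 ⬝ᵥ (B₂ *ᵥ ((x₀, 1) : (Fin n → ℝ) × ℝ).1))))
        (QF B₁ (b₁ + δ₁ • b₂) (-β) ((x₀, 1) : (Fin n → ℝ) × ℝ)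
          + μ₂ * ((1 / 2) * (((x₀, 1) : (Fin n → ℝ) × ℝ).1 ⬝ᵥ (B₂ *ᵥ ((x₀, 1) : (Fin n → ℝ) × ℝ).1)))) < 0 :=
      max_lt (corner_bS μ₁ hμ1m δ₁ hδ1m) (corner_bS μ₂ hμ2m δ₁ hδ1m)
    have hmb2 : max (QF B₁ (b₁ + δ₂ • b₂) (-β) ((x₀, 1) : (Fin n → ℝ) × ℝ)
          + μ₁ * ((1 / 2) * (((x₀, 1) : (Fin n → ℝ) × ℝ).1 ⬝ᵥ (B₂ *ᵥ ((x₀, 1) : (Fin n → ℝ) × ℝ).1))))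
        (QF B₁ (b₁ + δ₂ • b₂) (-β) ((x₀, 1) : (Fin n → ℝ) × ℝ)
          + μ₂ * ((1 / 2) * (((x₀, 1) : (Fin n → ℝ) × ℝ).1 ⬝ᵥ (B₂ *ᵥ ((x₀, 1) : (Fin n → ℝ) × ℝ).1)))) < 0 :=
      max_lt (corner_bS μ₁ hμ1m δ₂ hδ2m) (corner_bS μ₂ hμ2m δ₂ hδ2m)
    have hma1 : 0 < min (QF B₁ (b₁ + δ₁ • b₂) (-α) ((x₀, 1) : (Fin n → ℝ) × ℝ)
          + μ₁ * ((1 / 2) * (((x₀, 1) : (Fin n → ℝ) × ℝ).1 ⬝ᵥ (B₂ *ᵥ ((x₀, 1) : (Fin n → ℝ) × ℝ).1))))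
        (QF B₁ (b₁ + δ₁ • b₂) (-α) ((x₀, 1) : (Fin n → ℝ) × ℝ)
          + μ₂ * ((1 / 2) * (((x₀, 1) : (Fin n → ℝ) × ℝ).1 ⬝ᵥ (B₂ *ᵥ ((x₀, 1) : (Fin n → ℝ) × ℝ).1)))) :=
      lt_min (corner_aS μ₁ hμ1m δ₁ hδ1m) (corner_aS μ₂ hμ2m δ₁ hδ1m)
    have hma2 : 0 < min (QF B₁ (b₁ + δ₂ • b₂) (-α) ((x₀, 1) : (Fin n → ℝ) × ℝ)
          + μ₁ * ((1 / 2) * (((x₀, 1) : (Fin n → ℝ) × ℝ).1 ⬝ᵥ (B₂ *ᵥ ((x₀, 1) : (Fin n → ℝ) × ℝ).1))))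
        (QF B₁ (b₁ + δ₂ • b₂) (-α) ((x₀, 1) : (Fin n → ℝ) × ℝ)
          + μ₂ * ((1 / 2) * (((x₀, 1) : (Fin n → ℝ) × ℝ).1 ⬝ᵥ (B₂ *ᵥ ((x₀, 1) : (Fin n → ℝ) × ℝ).1)))) :=
      lt_min (corner_aS μ₁ hμ1m δ₂ hδ2m) (corner_aS μ₂ hμ2m δ₂ hδ2m)
    have hc0pos : 0 < cv 0 := by
      rcases lt_or_eq_of_le (hcnonneg 0) with h | h
      · exact h
      · exfalso
        have hs0 := hsep' (x₀, 1)
        rw [← h] at hs0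
        obtain ⟨z1, z2, z3, z4⟩ := four_zero (hcnonneg 1) (hcnonneg 2) (hcnonneg 3) (hcnonneg 4)
          hmb1 hmb2 (neg_lt_zero.mpr hma1) (neg_lt_zero.mpr hma2)
          (by linarith)
        have hwone := hwsum (fun _ => 1) (fun _ => one_pos)
        rw [Fin.sum_univ_five] at hwone
        simp only [one_mul] at hwone
        linarith
    have hc0ne : cv 0 ≠ 0 := ne_of_gt hc0pos
    -- multipliers
    set L₁ := cv 1 + cv 2 with hL1
    set L₂ := cv 3 + cv 4 with hL2
    have hL1n : 0 ≤ L₁ := by rw [hL1]; have := hcnonneg 1; have := hcnonneg 2; linarith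
    have hL2n : 0 ≤ L₂ := by rw [hL2]; have := hcnonneg 3; have := hcnonneg 4; linarith
    set δb := if L₁ = 0 then δ₁ else (cv 1 * δ₁ + cv 2 * δ₂) / L₁ with hδbdef
    set δa := if L₂ = 0 then δ₁ else (cv 3 * δ₁ + cv 4 * δ₂) / L₂ with hδadef
    have hδbI : δb ∈ Icc δ₁ δ₂ := by
      rw [hδbdef]
      split
      · exact hδ1m
      · rename_i hne
        have hp : 0 < L₁ := lt_of_le_of_ne hL1n (Ne.symm hne)
        have hc1 := hcnonneg 1
        have hc2 := hcnonneg 2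
        constructor
        · rw [le_div_iff₀ hp]; rw [hL1]; nlinarith
        · rw [div_le_iff₀ hp]; rw [hL1]; nlinarith
    have hδaI : δa ∈ Icc δ₁ δ₂ := by
      rw [hδadef]
      split
      · exact hδ1m
      · rename_i hne
        have hp : 0 < L₂ := lt_of_le_of_ne hL2n (Ne.symm hne)
        have hc3 := hcnonneg 3
        have hc4 := hcnonneg 4
        constructor
        · rw [le_div_iff₀ hp]; rw [hL2]; nlinarith
        · rw [div_le_iff₀ hp]; rw [hL2]; nlinarith
    have hδbsum : cv 1 * δ₁ + cv 2 * δ₂ = L₁ * δb := by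
      rw [hδbdef]
      split
      · rename_i h0
        have hc1 := hcnonneg 1
        have hc2 := hcnonneg 2
        have h1 : cv 1 = 0 := by rw [hL1] at h0; linarith
        have h2 : cv 2 = 0 := by rw [hL1] at h0; linarith
        rw [h1, h2, h0]; ring
      · rename_i hne
        field_simp
    have hδasum : cv 3 * δ₁ + cv 4 * δ₂ = L₂ * δa := by
      rw [hδadef]
      split
      · rename_i h0
        have hc3 := hcnonneg 3
        have hc4 := hcnonneg 4
        have h1 : cv 3 = 0 := by rw [hL2] at h0; linarith
        have h2 : cv 4 = 0 := by rw [hL2] at h0; linarith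
        rw [h1, h2, h0]; ring
      · rename_i hne
        field_simp
    -- the two quadratic certificates
    set G₀ : (Fin n → ℝ) × ℝ → ℝ := fun y =>
      (cv 0 * QF A a γ y + L₁ * QF (B₁ + μ₂ • B₂) (b₁ + δb • b₂) (-β) y)
        - L₂ * QF (B₁ + μ₁ • B₂) (b₁ + δa • b₂) (-α) y with hG₀
    set G₁ : (Fin n → ℝ) × ℝ → ℝ := fun y =>
      (cv 0 * QF A a γ y + L₁ * QF (B₁ + μ₁ • B₂) (b₁ + δb • b₂) (-β) y)
        - L₂ * QF (B₁ + μ₂ • B₂) (b₁ + δa • b₂) (-α) y with hG₁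
    have hG₀q : IsQuad G₀ := by
      rw [hG₀]
      exact (((isQuad_QF A a γ).const_mul (cv 0)).add
        ((isQuad_QF _ _ _).const_mul L₁)).sub ((isQuad_QF _ _ _).const_mul L₂)
    have hG₁q : IsQuad G₁ := by
      rw [hG₁]
      exact (((isQuad_QF A a γ).const_mul (cv 0)).add
        ((isQuad_QF _ _ _).const_mul L₁)).sub ((isQuad_QF _ _ _).const_mul L₂)
    have hmaxG : ∀ y, 0 ≤ max (G₀ y) (G₁ y) := by
      intro y
      have hs := hsep' y
      simp only [QF_delta] at hs
      rcases le_total 0 ((1 / 2) * (y.1 ⬝ᵥ (B₂ *ᵥ y.1))) with hpp | hpp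
      · have e12 : μ₁ * ((1 / 2) * (y.1 ⬝ᵥ (B₂ *ᵥ y.1)))
            ≤ μ₂ * ((1 / 2) * (y.1 ⬝ᵥ (B₂ *ᵥ y.1))) := mul_le_mul_of_nonneg_right hμ hpp
        rw [max_eq_right (by linarith), max_eq_right (by linarith),
          min_eq_left (by linarith), min_eq_left (by linarith)] at hs
        refine le_max_of_le_left ?_
        rw [hG₀]
        simp only [QF_decomp]
        have eqb : (QF B₁ b₁ (-β) y + δ₁ * (y.2 * (b₂ ⬝ᵥ y.1))
              + μ₂ * ((1 / 2) * (y.1 ⬝ᵥ (B₂ *ᵥ y.1)))) * cv 1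
            + (QF B₁ b₁ (-β) y + δ₂ * (y.2 * (b₂ ⬝ᵥ y.1))
              + μ₂ * ((1 / 2) * (y.1 ⬝ᵥ (B₂ *ᵥ y.1)))) * cv 2
            = L₁ * (QF B₁ b₁ (-β) y + δb * (y.2 * (b₂ ⬝ᵥ y.1))
              + μ₂ * ((1 / 2) * (y.1 ⬝ᵥ (B₂ *ᵥ y.1)))) := by
          rw [hL1] at hδbsum ⊢
          linear_combination (QF B₁ b₁ (-β) y + μ₂ * ((1 / 2) * (y.1 ⬝ᵥ (B₂ *ᵥ y.1)))) *
            (rfl : cv 1 + cv 2 = cv 1 + cv 2) + (y.2 * (b₂ ⬝ᵥ y.1)) * hδbsum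
        have eqa : (QF B₁ b₁ (-α) y + δ₁ * (y.2 * (b₂ ⬝ᵥ y.1))
              + μ₁ * ((1 / 2) * (y.1 ⬝ᵥ (B₂ *ᵥ y.1)))) * cv 3
            + (QF B₁ b₁ (-α) y + δ₂ * (y.2 * (b₂ ⬝ᵥ y.1))
              + μ₁ * ((1 / 2) * (y.1 ⬝ᵥ (B₂ *ᵥ y.1)))) * cv 4
            = L₂ * (QF B₁ b₁ (-α) y + δa * (y.2 * (b₂ ⬝ᵥ y.1))
              + μ₁ * ((1 / 2) * (y.1 ⬝ᵥ (B₂ *ᵥ y.1)))) := by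
          rw [hL2] at hδasum ⊢
          linear_combination (QF B₁ b₁ (-α) y + μ₁ * ((1 / 2) * (y.1 ⬝ᵥ (B₂ *ᵥ y.1)))) *
            (rfl : cv 3 + cv 4 = cv 3 + cv 4) + (y.2 * (b₂ ⬝ᵥ y.1)) * hδasum
        linarith [hs, eqb, eqa]
      · have e12 : μ₂ * ((1 / 2) * (y.1 ⬝ᵥ (B₂ *ᵥ y.1)))
            ≤ μ₁ * ((1 / 2) * (y.1 ⬝ᵥ (B₂ *ᵥ y.1))) := mul_le_mul_of_nonpos_right hμ hpp
        rw [max_eq_left (by linarith), max_eq_left (by linarith),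
          min_eq_right (by linarith), min_eq_right (by linarith)] at hs
        refine le_max_of_le_right ?_
        rw [hG₁]
        simp only [QF_decomp]
        have eqb : (QF B₁ b₁ (-β) y + δ₁ * (y.2 * (b₂ ⬝ᵥ y.1))
              + μ₁ * ((1 / 2) * (y.1 ⬝ᵥ (B₂ *ᵥ y.1)))) * cv 1
            + (QF B₁ b₁ (-β) y + δ₂ * (y.2 * (b₂ ⬝ᵥ y.1))
              + μ₁ * ((1 / 2) * (y.1 ⬝ᵥ (B₂ *ᵥ y.1)))) * cv 2
            = L₁ * (QF B₁ b₁ (-β) y + δb * (y.2 * (b₂ ⬝ᵥ y.1))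
              + μ₁ * ((1 / 2) * (y.1 ⬝ᵥ (B₂ *ᵥ y.1)))) := by
          rw [hL1] at hδbsum ⊢
          linear_combination (QF B₁ b₁ (-β) y + μ₁ * ((1 / 2) * (y.1 ⬝ᵥ (B₂ *ᵥ y.1)))) *
            (rfl : cv 1 + cv 2 = cv 1 + cv 2) + (y.2 * (b₂ ⬝ᵥ y.1)) * hδbsum
        have eqa : (QF B₁ b₁ (-α) y + δ₁ * (y.2 * (b₂ ⬝ᵥ y.1))
              + μ₂ * ((1 / 2) * (y.1 ⬝ᵥ (B₂ *ᵥ y.1)))) * cv 3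
            + (QF B₁ b₁ (-α) y + δ₂ * (y.2 * (b₂ ⬝ᵥ y.1))
              + μ₂ * ((1 / 2) * (y.1 ⬝ᵥ (B₂ *ᵥ y.1)))) * cv 4
            = L₂ * (QF B₁ b₁ (-α) y + δa * (y.2 * (b₂ ⬝ᵥ y.1))
              + μ₂ * ((1 / 2) * (y.1 ⬝ᵥ (B₂ *ᵥ y.1)))) := by
          rw [hL2] at hδasum ⊢
          linear_combination (QF B₁ b₁ (-α) y + μ₂ * ((1 / 2) * (y.1 ⬝ᵥ (B₂ *ᵥ y.1)))) *
            (rfl : cv 3 + cv 4 = cv 3 + cv 4) + (y.2 * (b₂ ⬝ᵥ y.1)) * hδasum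
        linarith [hs, eqb, eqa]
    obtain ⟨θ, hθI, hkey⟩ := isQuad_max_nonneg hG₀q hG₁q hmaxG
    have hθ0 : 0 ≤ θ := hθI.1
    have hθ1 : θ ≤ 1 := hθI.2
    refine ⟨L₁ / cv 0, L₂ / cv 0, div_nonneg hL1n hc0pos.le, div_nonneg hL2n hc0pos.le,
      (1 - θ) * μ₁ + θ * μ₂,
      ⟨by nlinarith [mul_nonneg hθ0 (sub_nonneg.2 hμ)],
       by nlinarith [mul_nonneg (by linarith : (0:ℝ) ≤ 1 - θ) (sub_nonneg.2 hμ)]⟩,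
      (1 - θ) * μ₂ + θ * μ₁,
      ⟨by nlinarith [mul_nonneg (by linarith : (0:ℝ) ≤ 1 - θ) (sub_nonneg.2 hμ)],
       by nlinarith [mul_nonneg hθ0 (sub_nonneg.2 hμ)]⟩,
      δa, hδaI, δb, hδbI, by ring, ?_⟩
    intro x
    have hk := hkey (x, 1)
    have hE : (1 - θ) * G₀ (x, 1) + θ * G₁ (x, 1)
        = cv 0 * ((1 / 2) * (x ⬝ᵥ (A *ᵥ x)) + a ⬝ᵥ x + γ
          + L₁ / cv 0 * ((1 / 2) * (x ⬝ᵥ ((B₁ + ((1 - θ) * μ₂ + θ * μ₁) • B₂) *ᵥ x))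
            + (b₁ + δb • b₂) ⬝ᵥ x - β)
          + L₂ / cv 0 * (α - ((1 / 2) * (x ⬝ᵥ ((B₁ + ((1 - θ) * μ₁ + θ * μ₂) • B₂) *ᵥ x))
            + (b₁ + δa • b₂) ⬝ᵥ x))) := by
      rw [hG₀, hG₁]
      simp only [QF_at_one, add_mulVec, smul_mulVec, dotProduct_add, dotProduct_smul,
        add_dotProduct, smul_dotProduct, smul_eq_mul]
      field_simp
      ring
    rw [hE] at hk
    by_contra hcon
    push_neg at hcon
    have := mul_neg_of_pos_of_neg hc0pos hcon
    linarith
  · -- easy direction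
    rintro ⟨lam₁, lam₂, hl1, hl2, μa, hμa, μb, hμb, δa, hδa, δb, hδb, hsum, hcert⟩ x hx
    have h1 := (hx μb hμb δb hδb).2
    have h2 := (hx μa hμa δa hδa).1
    have h3 := hcert x
    have t1 : lam₁ * ((1 / 2) * (x ⬝ᵥ ((B₁ + μb • B₂) *ᵥ x)) + (b₁ + δb • b₂) ⬝ᵥ x - β) ≤ 0 :=
      mul_nonpos_of_nonneg_of_nonpos hl1 (by linarith)
    have t2 : lam₂ * (α - ((1 / 2) * (x ⬝ᵥ ((B₁ + μa • B₂) *ᵥ x)) + (b₁ + δa • b₂) ⬝ᵥ x)) ≤ 0 :=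
      mul_nonpos_of_nonneg_of_nonpos hl2 (by linarith)
    linarith
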